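/- (Early termination correctness) Let L be a list of items sorted in descending order by upper bounds b(i), where each b(i) ≥ r(i) for a true rating function r. If the algorithm has examined a prefix P of L containing a set S of K items with min_{s∈S} r(s) > b(i*) for the current item i* at position |P|+1, then every item in L outside P has true rating strictly less than min_{s∈S} r(s); hence S is the exact top-K of L under r (assuming S consists of the K largest ratings within P). -/

import Mathlib

/-- Early termination correctness: if the heap's minimum true rating strictly exceeds
the bound of the next unvisited item, all unvisited items have strictly smaller true
ratings, and `S` is an exact top-K of the whole list. -/
theorem early_termination_correct {α : Type*} (L : List α) (r b : α → ℝ)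
    (hb : ∀ i, r i ≤ b i)
    (hsorted : (L.map b).Pairwise (· ≥ ·))
    (m K : ℕ) (hm : m < L.length)
    (S : Finset α)
    (hScard : S.card = K)
    (hSsub : ∀ s ∈ S, s ∈ L.take m)
    (hStop : ∀ i ∈ L.take m, i ∉ S → ∀ s ∈ S, r i ≤ r s)
    (hterm : ∀ s ∈ S, b (L.get ⟨m, hm⟩) < r s) :
    (∀ i ∈ L.drop m, ∀ s ∈ S, r i < r s) ∧
      (∀ i ∈ L, i ∉ S → ∀ s ∈ S, r i ≤ r s) := by
  have hpair : L.Pairwise (fun x y => b x ≥ b y) := by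
    rw [List.pairwise_map] at hsorted
    exact hsorted
  have hdroppair : (L.drop m).Pairwise (fun x y => b x ≥ b y) :=
    hpair.sublist (List.drop_sublist m L)
  have hdrop : L.drop m = L.get ⟨m, hm⟩ :: L.drop (m + 1) :=
    List.drop_eq_getElem_cons hm
  have key : ∀ i ∈ L.drop m, ∀ s ∈ S, r i < r s := by
    intro i hi s hs
    rw [hdrop] at hi
    rcases List.mem_cons.mp hi with h | h
    · calc r i ≤ b i := hb i
        _ < r s := h ▸ hterm s hs
    · have hbi : b (L.get ⟨m, hm⟩) ≥ b i := by
        rw [hdrop] at hdroppair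
        exact (List.pairwise_cons.mp hdroppair).1 i h
      calc r i ≤ b i := hb i
        _ ≤ b (L.get ⟨m, hm⟩) := hbi
        _ < r s := hterm s hs
  refine ⟨key, fun i hi hiS s hs => ?_⟩
  rcases List.mem_append.mp (by rw [List.take_append_drop m L]; exact hi :
      i ∈ L.take m ++ L.drop m) with h | h
  · exact hStop i h hiS s hs
  · exact (key i h s hs).le
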